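/- Let n = p₁p₂p₃ be a product of three distinct primes with gcd(n,6) = 1 and n > 1000. Let G = ⟨g⟩ be cyclic of order n and S = (x₁g)·(x₂g)·(x₃g)·(x₄g) a minimal zero-sum sequence over G with 1 ≤ x_i ≤ n and {gcd(n,x₁), gcd(n,x₂), gcd(n,x₃), gcd(n,x₄)} = {p₁, p₂, p₁p₃, p₂p₃}. Then ind(S) = 1. -/

import Mathlib

/-- Canonical residue `|x|_n ∈ [1,n]` of `x` modulo `n`. -/
def resid (n x : ℕ) : ℕ := if x % n = 0 then n else x % n

/-- The set of coefficient sums of the sequence (given by its coefficient list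
w.r.t. a fixed generator of the cyclic group of order `n`) with respect to all
generators; a generator corresponds to a unit `w` mod `n`. -/
def indSums (n : ℕ) (S : List ℕ) : Set ℕ :=
  {m | ∃ w : ℕ, Nat.Coprime w n ∧ (S.map (fun x => resid n (w * x))).sum = m}

/-- The index of the sequence: the minimum over generators of the normalized
coefficient sum. -/
noncomputable def seqIndex (n : ℕ) (S : List ℕ) : ℚ :=
  ((sInf (indSums n S) : ℕ) : ℚ) / n

/-- `S` is a minimal zero-sum sequence over the cyclic group of order `n`
(terms encoded by their coefficients w.r.t. a fixed generator). -/
def MinZeroSum (n : ℕ) (S : List ℕ) : Prop :=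
  n ∣ S.sum ∧ ∀ T : List ℕ, List.Sublist T S → T ≠ [] → T ≠ S → ¬ n ∣ T.sum

lemma resid_pos (n x : ℕ) (hn : 0 < n) : 1 ≤ resid n x := by
  unfold resid; split <;> omega

lemma resid_le (n x : ℕ) (hn : 0 < n) : resid n x ≤ n := by
  unfold resid; split
  · omega
  · exact le_of_lt (Nat.mod_lt _ hn)

lemma resid_modeq (n x : ℕ) : resid n x ≡ x [MOD n] := by
  unfold resid Nat.ModEq; split
  · simp [Nat.mod_self]; omega
  · simp [Nat.mod_mod_of_dvd]

lemma resid_eq_of_modeq {n x y : ℕ} (h : x ≡ y [MOD n]) : resid n x = resid n y := by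
  unfold resid; unfold Nat.ModEq at h; rw [h]

lemma resid_mul_left (m p x : ℕ) (hm : 0 < m) : resid (m*p) (m*x) = m * resid p x := by
  unfold resid
  rw [Nat.mul_mod_mul_left]
  rcases Nat.eq_zero_or_pos (x % p) with h | h
  · simp [h]
  · have h1 : ¬ (m * (x % p) = 0) := by
      have : 0 < m * (x % p) := Nat.mul_pos hm h
      omega
    simp [h1, Nat.ne_of_gt h]

lemma resid_factor {N M x z m : ℕ} (hm : 0 < m) (hN : N = m * M) (hx : x = m * z) :
    resid N x = m * resid M z := by subst hN hx; exact resid_mul_left m M z hm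

lemma resid_dvd_iff {n x : ℕ} (hn : 0 < n) : resid n x = n ↔ n ∣ x := by
  unfold resid
  constructor
  · intro h; split at h
    · exact Nat.dvd_of_mod_eq_zero (by assumption)
    · exfalso; have := Nat.mod_lt x hn; omega
  · intro h; simp [Nat.mod_eq_zero_of_dvd h]

lemma resid_compl {n x : ℕ} (hn : 0 < n) (h : ¬ n ∣ x) :
    resid n ((n-1)*x) = n - resid n x := by
  have hx : x % n ≠ 0 := fun hc => h (Nat.dvd_of_mod_eq_zero hc)
  have hkey : ((n-1)*x) % n = n - x % n := by
    have h1 : ((n-1)*x + x) % n = 0 := by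
      have : (n-1)*x + x = n * x := by
        have : n - 1 + 1 = n := by omega
        calc (n-1)*x + x = (n-1+1)*x := by ring
        _ = n * x := by rw [this]
      rw [this]; simp [Nat.mul_mod_right]
    have h2 := Nat.add_mod ((n-1)*x) x n
    have h3 := Nat.mod_lt ((n-1)*x) hn
    have h4 := Nat.mod_lt x hn
    set A := ((n-1)*x) % n
    set B := x % n
    have h5 : (A + B) % n = 0 := by rw [← Nat.add_mod]; exact h1
    rcases Nat.lt_or_ge (A + B) n with hlt | hge
    · rw [Nat.mod_eq_of_lt hlt] at h5; omega
    · have : A + B - n < n := by omega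
      have h6 : (A + B) % n = A + B - n := by
        rw [Nat.mod_eq_sub_mod hge, Nat.mod_eq_of_lt this]
      omega
  unfold resid
  rw [hkey]
  have h4 := Nat.mod_lt x hn
  simp [hx]
  intro hc; omega

lemma crt3 {p q r : ℕ} (hpq : Nat.Coprime p q) (hpr : Nat.Coprime p r)
    (hqr : Nat.Coprime q r) (s t u : ℕ) :
    ∃ w, w ≡ s [MOD p] ∧ w ≡ t [MOD q] ∧ w ≡ u [MOD r] := by
  obtain ⟨v, hv1, hv2⟩ := Nat.chineseRemainder hpq s t
  have hpqr : Nat.Coprime (p*q) r := Nat.Coprime.mul hpr hqr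
  obtain ⟨w, hw1, hw2⟩ := Nat.chineseRemainder hpqr v u
  refine ⟨w, ?_, ?_, hw2⟩
  · exact (hw1.of_dvd (Dvd.intro q rfl)).trans hv1
  · exact (hw1.of_dvd (Dvd.intro_left p rfl)).trans hv2

lemma not_dvd_of_modeq {p w s : ℕ} (h : w ≡ s [MOD p]) (hs : ¬ p ∣ s) : ¬ p ∣ w := by
  intro hc
  apply hs
  have h1 : w % p = 0 := Nat.mod_eq_zero_of_dvd hc
  unfold Nat.ModEq at h
  exact Nat.dvd_of_mod_eq_zero (by omega)

lemma one_mod_eq (p : ℕ) (hp : 2 ≤ p) : 1 % p = 1 := Nat.mod_eq_of_lt (by omega)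

lemma resid_one (p : ℕ) (hp : 2 ≤ p) : resid p 1 = 1 := by
  unfold resid; rw [one_mod_eq p hp]; simp

lemma resid_pred (p : ℕ) (hp : 2 ≤ p) : resid p (p-1) = p - 1 := by
  unfold resid; rw [Nat.mod_eq_of_lt (by omega)]; have : ¬ (p - 1 = 0) := by omega
  simp [this]

lemma coprime_pred (n : ℕ) (hn : 2 ≤ n) : Nat.Coprime (n-1) n := by
  obtain ⟨m, rfl⟩ : ∃ m, n = m + 1 := ⟨n-1, by omega⟩
  simp only [Nat.add_sub_cancel]
  have h2 : Nat.Coprime (m+1) m := by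
    unfold Nat.Coprime
    rw [Nat.add_comm, Nat.gcd_add_self_left]
    exact Nat.gcd_one_left m
  exact h2.symm

lemma prime_ge5 {p n : ℕ} (hp : p.Prime) (hdvd : p ∣ n) (h6 : Nat.Coprime n 6) : 5 ≤ p := by
  have hc : Nat.Coprime p 6 := Nat.Coprime.coprime_dvd_left hdvd h6
  have h2 := hp.two_le
  by_contra hlt
  push_neg at hlt
  interval_cases p <;> revert hp hc <;> decide

lemma core (p q r a b c d : ℕ) (hp : p.Prime) (hq : q.Prime) (hr : r.Prime)
    (hp5 : 5 ≤ p) (hr5 : 5 ≤ r)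
    (hpq : Nat.Coprime p q) (hpr : Nat.Coprime p r) (hqr : Nat.Coprime q r)
    (hb : ¬ r ∣ b) (hd : ¬ p ∣ d)
    (hall : ∀ w, Nat.Coprime w (p*q*r) →
      resid (p*q*r) (w*(p*a)) + resid (p*q*r) (w*(q*b)) +
      resid (p*q*r) (w*(p*r*c)) + resid (p*q*r) (w*(q*r*d)) = 2*(p*q*r)) : False := by
  have hp2 : 2 ≤ p := hp.two_le
  have hq2 : 2 ≤ q := hq.two_le
  have hr2 : 2 ≤ r := hr.two_le
  have hq0 : 0 < q := by omega
  have hpr0 : 0 < p*r := by positivity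
  have hqr0 : 0 < q*r := by positivity
  obtain ⟨d', -, hd'⟩ := Nat.exists_mul_mod_eq_one_of_coprime
    ((hp.coprime_iff_not_dvd.mpr hd).symm) (by omega)
  obtain ⟨b', -, hb'⟩ := Nat.exists_mul_mod_eq_one_of_coprime
    ((hr.coprime_iff_not_dvd.mpr hb).symm) (by omega)
  have hdd' : d * d' ≡ 1 [MOD p] := by unfold Nat.ModEq; rw [one_mod_eq p hp2]; exact hd'
  have hbb' : b * b' ≡ 1 [MOD r] := by unfold Nat.ModEq; rw [one_mod_eq r hr2]; exact hb'
  have hrodd : r % 2 = 1 := by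
    rcases Nat.mod_two_eq_zero_or_one r with h | h
    · exfalso
      rcases (Nat.Prime.eq_one_or_self_of_dvd hr 2 (Nat.dvd_of_mod_eq_zero h)) with h2 | h2 <;> omega
    · exact h
  set h := r / 2 with hh
  have hhr : 2*h + 1 = r := by omega
  have hh2 : 2 ≤ h := by omega
  set u := h * b' * p with hu
  have hru : ¬ r ∣ u := by
    intro hc
    have h1 : ¬ r ∣ h := by intro hc'; have := Nat.le_of_dvd (by omega) hc'; omega
    have h2 : ¬ r ∣ b' := by
      intro hc'
      have : b * b' % r = 0 := by
        obtain ⟨e, he⟩ := hc'; rw [he]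
        rw [show b * (r * e) = r * (b*e) by ring]; simp [Nat.mul_mod_right]
      omega
    have h3 : ¬ r ∣ p := hr.coprime_iff_not_dvd.mp hpr.symm
    rcases (hr.dvd_mul.mp hc) with hc2 | hc2
    · rcases (hr.dvd_mul.mp hc2) with hc3 | hc3
      · exact h1 hc3
      · exact h2 hc3
    · exact h3 hc2
  have hpd' : ¬ p ∣ d' := by
    intro hc
    have : d * d' % p = 0 := by
      obtain ⟨e, he⟩ := hc; rw [he, show d * (p * e) = p * (d*e) by ring]
      simp [Nat.mul_mod_right]
    omega
  have mkw : ∀ s : ℕ, ¬ p ∣ s → ∃ w, (w ≡ s [MOD p] ∧ w ≡ 1 [MOD q] ∧ w ≡ u [MOD r]) ∧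
      Nat.Coprime w (p*q*r) := by
    intro s hs
    obtain ⟨w, h1, h2, h3⟩ := crt3 hpq hpr hqr s 1 u
    refine ⟨w, ⟨h1, h2, h3⟩, ?_⟩
    have c1 : Nat.Coprime w p := (hp.coprime_iff_not_dvd.mpr (not_dvd_of_modeq h1 hs)).symm
    have c2 : Nat.Coprime w q := by
      refine (hq.coprime_iff_not_dvd.mpr (not_dvd_of_modeq h2 ?_)).symm
      intro hc; have := Nat.le_of_dvd (by omega) hc; omega
    have c3 : Nat.Coprime w r := (hr.coprime_iff_not_dvd.mpr (not_dvd_of_modeq h3 hru)).symm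
    exact Nat.Coprime.mul_right (Nat.Coprime.mul_right c1 c2) c3
  obtain ⟨w1, ⟨hw1p, hw1q, hw1r⟩, hw1c⟩ := mkw d' hpd'
  obtain ⟨w2, ⟨hw2p, hw2q, hw2r⟩, hw2c⟩ := mkw ((p-1)*d') (by
    intro hc
    rcases hp.dvd_mul.mp hc with hc2 | hc2
    · have := Nat.le_of_dvd (by omega) hc2; omega
    · exact hpd' hc2)
  obtain ⟨w3, ⟨hw3p, hw3q, hw3r⟩, hw3c⟩ := mkw 1 (by intro hc; have := Nat.le_of_dvd (by omega) hc; omega)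
  obtain ⟨w4, ⟨hw4p, hw4q, hw4r⟩, hw4c⟩ := mkw 2 (by intro hc; have := Nat.le_of_dvd (by omega) hc; omega)
  set β₁ := resid (p*r) (w1*b) with hβ₁
  set β₂ := resid (p*r) (w2*b) with hβ₂
  set β₃ := resid (p*r) (w3*b) with hβ₃
  set β₄ := resid (p*r) (w4*b) with hβ₄
  set δ₁ := resid p (w1*d) with hδ₁
  set δ₂ := resid p (w2*d) with hδ₂
  set δ₃ := resid p (w3*d) with hδ₃
  set δ₄ := resid p (w4*d) with hδ₄
  have key : ∀ w, w ≡ 1 [MOD q] → w ≡ u [MOD r] →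
      resid (p*q*r) (w*(p*a)) = resid (p*q*r) (w3*(p*a)) ∧
      resid (p*q*r) (w*(p*r*c)) = resid (p*q*r) (w3*(p*r*c)) := by
    intro w hwq hwr
    have hq3 : w ≡ w3 [MOD q] := hwq.trans hw3q.symm
    have hr3 : w ≡ w3 [MOD r] := hwr.trans hw3r.symm
    have hqr3 : w ≡ w3 [MOD q*r] := (Nat.modEq_and_modEq_iff_modEq_mul hqr).mp ⟨hq3, hr3⟩
    constructor
    · apply resid_eq_of_modeq
      have M := (hqr3.mul_right a).mul_left' p
      rw [show p*(w*a) = w*(p*a) by ring, show p*(w3*a) = w3*(p*a) by ring,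
        show p*(q*r) = p*q*r by ring] at M
      exact M
    · apply resid_eq_of_modeq
      have M := (hq3.mul_right c).mul_left' (p*r)
      rw [show (p*r)*(w*c) = w*(p*r*c) by ring, show (p*r)*(w3*c) = w3*(p*r*c) by ring,
        show (p*r)*q = p*q*r by ring] at M
      exact M
  have expand : ∀ w, resid (p*q*r) (w*(q*b)) = q * resid (p*r) (w*b) ∧
      resid (p*q*r) (w*(q*r*d)) = (q*r) * resid p (w*d) := by
    intro w
    exact ⟨resid_factor hq0 (by ring) (by ring), resid_factor hqr0 (by ring) (by ring)⟩
  have E : ∀ w, Nat.Coprime w (p*q*r) → w ≡ 1 [MOD q] → w ≡ u [MOD r] →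
      resid (p*q*r) (w3*(p*a)) + q * resid (p*r) (w*b) + resid (p*q*r) (w3*(p*r*c)) +
        (q*r) * resid p (w*d) = 2*(p*q*r) := by
    intro w hc hwq hwr
    have h1 := hall w hc
    obtain ⟨k1, k2⟩ := key w hwq hwr
    obtain ⟨e1, e2⟩ := expand w
    rw [k1, k2, e1, e2] at h1
    omega
  have E1 := E w1 hw1c hw1q hw1r
  have E2 := E w2 hw2c hw2q hw2r
  have E3 := E w3 hw3c hw3q hw3r
  have E4 := E w4 hw4c hw4q hw4r
  rw [← hβ₁, ← hδ₁] at E1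
  rw [← hβ₂, ← hδ₂] at E2
  rw [← hβ₃, ← hδ₃] at E3
  rw [← hβ₄, ← hδ₄] at E4
  have cancel : ∀ β β' δ δ' : ℕ, q*β + (q*r)*δ = q*β' + (q*r)*δ' → β + r*δ = β' + r*δ' := by
    intro β β' δ δ' hE
    apply Nat.eq_of_mul_eq_mul_left hq0
    rw [Nat.mul_add, Nat.mul_add, ← Nat.mul_assoc, ← Nat.mul_assoc]
    omega
  have k12 : β₁ + r*δ₁ = β₂ + r*δ₂ := cancel _ _ _ _ (by omega)
  have k13 : β₁ + r*δ₁ = β₃ + r*δ₃ := cancel _ _ _ _ (by omega)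
  have k14 : β₁ + r*δ₁ = β₄ + r*δ₄ := cancel _ _ _ _ (by omega)
  have hδ1v : δ₁ = 1 := by
    rw [hδ₁]
    have : w1 * d ≡ 1 [MOD p] := by
      calc w1 * d ≡ d' * d [MOD p] := hw1p.mul_right d
      _ = d * d' := by ring
      _ ≡ 1 [MOD p] := hdd'
    rw [resid_eq_of_modeq this, resid_one p hp2]
  have hδ2v : δ₂ = p - 1 := by
    rw [hδ₂]
    have : w2 * d ≡ p - 1 [MOD p] := by
      calc w2 * d ≡ (p-1)*d' * d [MOD p] := hw2p.mul_right d
      _ = (p-1) * (d*d') := by ring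
      _ ≡ (p-1) * 1 [MOD p] := hdd'.mul_left (p-1)
      _ = p - 1 := by ring
    rw [resid_eq_of_modeq this, resid_pred p hp2]
  have hβ1le : β₁ ≤ p*r := resid_le _ _ hpr0
  have hβ2ge : 1 ≤ β₂ := resid_pos _ _ hpr0
  have hβ3p : β₃ ≡ b [MOD p] := by
    have h1 : β₃ ≡ w3 * b [MOD p] := (resid_modeq (p*r) (w3*b)).of_dvd (dvd_mul_right p r)
    have h2 : w3 * b ≡ 1 * b [MOD p] := hw3p.mul_right b
    rw [one_mul] at h2
    exact h1.trans h2
  have hβ4p : β₄ ≡ 2*b [MOD p] := by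
    have h1 : β₄ ≡ w4 * b [MOD p] := (resid_modeq (p*r) (w4*b)).of_dvd (dvd_mul_right p r)
    exact h1.trans (hw4p.mul_right b)
  have hδ3p : δ₃ ≡ d [MOD p] := by
    have h1 : δ₃ ≡ w3 * d [MOD p] := resid_modeq p (w3*d)
    have h2 : w3 * d ≡ 1 * d [MOD p] := hw3p.mul_right d
    rw [one_mul] at h2
    exact h1.trans h2
  have hδ4p : δ₄ ≡ 2*d [MOD p] := (resid_modeq p (w4*d)).trans (hw4p.mul_right d)
  set k := β₁ + r*δ₁ with hk
  have hk3 : k ≡ b + r*d [MOD p] := by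
    rw [k13]; exact hβ3p.add (hδ3p.mul_left r)
  have hk4 : k ≡ 2*(b + r*d) [MOD p] := by
    rw [k14]
    calc β₄ + r*δ₄ ≡ 2*b + r*(2*d) [MOD p] := hβ4p.add (hδ4p.mul_left r)
    _ = 2*(b + r*d) := by ring
  have hpX : p ∣ (b + r*d) := by
    have hXX : (b + r*d) ≡ 2*(b+r*d) [MOD p] := hk3.symm.trans hk4
    have := (Nat.modEq_iff_dvd' (by omega)).mp hXX
    rwa [show 2*(b+r*d) - (b+r*d) = b + r*d by omega] at this
  have hpk : p ∣ k := by
    have h1 : (b + r*d) % p = 0 := Nat.mod_eq_zero_of_dvd hpX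
    unfold Nat.ModEq at hk3
    exact Nat.dvd_of_mod_eq_zero (by omega)
  have hβ1r : β₁ ≡ u * b [MOD r] := by
    have h1 : β₁ ≡ w1 * b [MOD r] := (resid_modeq (p*r) (w1*b)).of_dvd (dvd_mul_left r p)
    exact h1.trans (hw1r.mul_right b)
  have hkr : k ≡ p * h [MOD r] := by
    calc k = β₁ + r*δ₁ := hk
    _ ≡ u*b + r*δ₁ [MOD r] := hβ1r.add_right _
    _ ≡ u*b + 0 [MOD r] := Nat.ModEq.add_left _ ((Nat.modEq_zero_iff_dvd).mpr ⟨δ₁, rfl⟩)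
    _ = (h*p)*(b*b') := by rw [hu]; ring
    _ ≡ (h*p)*1 [MOD r] := hbb'.mul_left (h*p)
    _ = p * h := by ring
  obtain ⟨κ, hκ⟩ := hpk
  rw [hκ] at hkr
  have hκr : κ ≡ h [MOD r] := Nat.ModEq.cancel_left_of_coprime hpr.symm hkr
  have hmod : κ % r = h := by
    unfold Nat.ModEq at hκr
    rw [Nat.mod_eq_of_lt (by omega : h < r)] at hκr
    exact hκr
  have B1 : p*κ ≤ p*r + r := by
    rw [← hκ]
    have : k = β₁ + r*1 := by rw [hk, hδ1v]
    omega
  have B2 : 1 + r*(p-1) ≤ p*κ := by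
    rw [← hκ]
    have : k = β₂ + r*(p-1) := by rw [k12, hδ2v]
    omega
  have hj : κ = r*(κ/r) + h := by rw [← hmod]; exact (Nat.div_add_mod κ r).symm
  have h5h : 5*h ≤ p*h := Nat.mul_le_mul_right h hp5
  rcases Nat.eq_zero_or_pos (κ/r) with hj0 | hjpos
  · rw [hj0, Nat.mul_zero, Nat.zero_add] at hj
    have e2 : r*(p-1) + r = r*p := by
      have hpe : p - 1 + 1 = p := by omega
      calc r*(p-1) + r = r*((p-1)+1) := by ring
      _ = r*p := by rw [hpe]
    have e3 : r*p = 2*(p*h) + p := by rw [← hhr]; ring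
    rw [hj] at B2
    omega
  · have hκge : r + h ≤ κ := by
      have := Nat.le_mul_of_pos_right r hjpos
      omega
    have e1 : p*(r+h) = p*r + p*h := by ring
    have hle : p*(r+h) ≤ p*κ := Nat.mul_le_mul_left p hκge
    omega

lemma finisher (p q r n x₁ x₂ x₃ x₄ : ℕ) {y₁ y₂ y₃ y₄ : ℕ}
    (hp : p.Prime) (hq : q.Prime) (hr : r.Prime)
    (hpq : p ≠ q) (hpr : p ≠ r) (hqr : q ≠ r)
    (hn : n = p * q * r) (h6 : Nat.Coprime n 6)
    (hg1 : p = Nat.gcd n y₁) (hg2 : q = Nat.gcd n y₂)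
    (hg3 : p * r = Nat.gcd n y₃) (hg4 : q * r = Nat.gcd n y₄)
    (hsx : n ∣ x₁ + x₂ + x₃ + x₄)
    (hyx : y₁ + y₂ + y₃ + y₄ = x₁ + x₂ + x₃ + x₄)
    (hres : ∀ w : ℕ, resid n (w*y₁) + resid n (w*y₂) + resid n (w*y₃) + resid n (w*y₄) =
      resid n (w*x₁) + resid n (w*x₂) + resid n (w*x₃) + resid n (w*x₄)) :
    seqIndex n [x₁, x₂, x₃, x₄] = 1 := by
  have hp5 : 5 ≤ p := prime_ge5 hp (by rw [hn]; exact ⟨q*r, by ring⟩) h6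
  have hq5 : 5 ≤ q := prime_ge5 hq (by rw [hn]; exact ⟨p*r, by ring⟩) h6
  have hr5 : 5 ≤ r := prime_ge5 hr (by rw [hn]; exact ⟨p*q, by ring⟩) h6
  have cpq : Nat.Coprime p q := (Nat.coprime_primes hp hq).mpr hpq
  have cpr : Nat.Coprime p r := (Nat.coprime_primes hp hr).mpr hpr
  have cqr : Nat.Coprime q r := (Nat.coprime_primes hq hr).mpr hqr
  have hn0 : 0 < n := by rw [hn]; positivity
  have hn2 : 2 ≤ n := by
    rw [hn]; calc 2 ≤ 5 := by omega
    _ ≤ p := hp5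
    _ ≤ p * (q*r) := Nat.le_mul_of_pos_right p (by positivity)
    _ = p * q * r := by ring
  -- decompose y's
  have hd1 : p ∣ y₁ := by
    have h := Nat.gcd_dvd_right n y₁; rwa [← hg1] at h
  obtain ⟨a, rfl⟩ := hd1
  have hd3 : (p*r) ∣ y₃ := by
    have h := Nat.gcd_dvd_right n y₃; rwa [← hg3] at h
  obtain ⟨c, rfl⟩ := hd3
  have hd2 : q ∣ y₂ := by
    have h := Nat.gcd_dvd_right n y₂; rwa [← hg2] at h
  obtain ⟨b, rfl⟩ := hd2
  have hd4 : (q*r) ∣ y₄ := by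
    have h := Nat.gcd_dvd_right n y₄; rwa [← hg4] at h
  obtain ⟨d, rfl⟩ := hd4
  have hp0 : 0 < p := by omega
  have hq0 : 0 < q := by omega
  have hga : Nat.gcd (q*r) a = 1 := by
    apply Nat.eq_of_mul_eq_mul_left hp0
    rw [show p * Nat.gcd (q*r) a = Nat.gcd (p*(q*r)) (p*a) from (Nat.gcd_mul_left p (q*r) a).symm,
      show p*(q*r) = n by rw [hn]; ring, ← hg1, Nat.mul_one]
  have hgb : Nat.gcd (p*r) b = 1 := by
    apply Nat.eq_of_mul_eq_mul_left hq0
    rw [show q * Nat.gcd (p*r) b = Nat.gcd (q*(p*r)) (q*b) from (Nat.gcd_mul_left q (p*r) b).symm,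
      show q*(p*r) = n by rw [hn]; ring, ← hg2, Nat.mul_one]
  have hgc : Nat.gcd q c = 1 := by
    apply Nat.eq_of_mul_eq_mul_left (show 0 < p*r by positivity)
    rw [show (p*r) * Nat.gcd q c = Nat.gcd ((p*r)*q) ((p*r)*c) from (Nat.gcd_mul_left (p*r) q c).symm,
      show (p*r)*q = n by rw [hn]; ring, ← hg3, Nat.mul_one]
  have hgd : Nat.gcd p d = 1 := by
    apply Nat.eq_of_mul_eq_mul_left (show 0 < q*r by positivity)
    rw [show (q*r) * Nat.gcd p d = Nat.gcd ((q*r)*p) ((q*r)*d) from (Nat.gcd_mul_left (q*r) p d).symm,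
      show (q*r)*p = n by rw [hn]; ring, ← hg4, Nat.mul_one]
  have hbr : ¬ r ∣ b := by
    intro hc
    have : r ∣ Nat.gcd (p*r) b := Nat.dvd_gcd (dvd_mul_left r p) hc
    rw [hgb] at this
    have := Nat.le_of_dvd (by omega) this; omega
  have hdp : ¬ p ∣ d := by
    intro hc
    have : p ∣ Nat.gcd p d := Nat.dvd_gcd dvd_rfl hc
    rw [hgd] at this
    have := Nat.le_of_dvd (by omega) this; omega
  -- n does not divide any w * yᵢ for coprime w
  have hnd1 : ¬ n ∣ p*a := by
    intro hc
    rw [show n = p*(q*r) by rw [hn]; ring] at hc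
    have h2 : (q*r) ∣ a := (mul_dvd_mul_iff_left (by omega : p ≠ 0)).mp hc
    rw [Nat.gcd_eq_left h2] at hga
    have : 2 ≤ q*r := by calc 2 ≤ 5 := by omega
                              _ ≤ q := hq5
                              _ ≤ q*r := Nat.le_mul_of_pos_right q (by omega)
    omega
  have hnd2 : ¬ n ∣ q*b := by
    intro hc
    rw [show n = q*(p*r) by rw [hn]; ring] at hc
    have h2 : (p*r) ∣ b := (mul_dvd_mul_iff_left (by omega : q ≠ 0)).mp hc
    rw [Nat.gcd_eq_left h2] at hgb
    have : 2 ≤ p*r := by calc 2 ≤ 5 := by omega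
                              _ ≤ p := hp5
                              _ ≤ p*r := Nat.le_mul_of_pos_right p (by omega)
    omega
  have hnd3 : ¬ n ∣ (p*r)*c := by
    intro hc
    rw [show n = (p*r)*q by rw [hn]; ring] at hc
    have h2 : q ∣ c := (mul_dvd_mul_iff_left (by positivity : p*r ≠ 0)).mp hc
    rw [Nat.gcd_eq_left h2] at hgc
    omega
  have hnd4 : ¬ n ∣ (q*r)*d := by
    intro hc
    rw [show n = (q*r)*p by rw [hn]; ring] at hc
    have h2 : p ∣ d := (mul_dvd_mul_iff_left (by positivity : q*r ≠ 0)).mp hc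
    exact hdp h2
  have hndw : ∀ w y, Nat.Coprime w n → ¬ n ∣ y → ¬ n ∣ w*y := by
    intro w y hw hy hc
    exact hy (((hw.symm)).dvd_of_dvd_mul_left hc)
  -- the coefficient sum function on y's
  set T : ℕ → ℕ := fun w => resid n (w*(p*a)) + resid n (w*(q*b)) + resid n (w*((p*r)*c)) +
    resid n (w*((q*r)*d)) with hT
  have hsumy : n ∣ (p*a) + (q*b) + ((p*r)*c) + ((q*r)*d) := by rw [hyx]; exact hsx
  have hTmod : ∀ w, n ∣ T w := by
    intro w
    have h1 : T w ≡ w*(p*a) + w*(q*b) + w*((p*r)*c) + w*((q*r)*d) [MOD n] := by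
      exact (((resid_modeq n _).add (resid_modeq n _)).add (resid_modeq n _)).add (resid_modeq n _)
    have h2 : w*(p*a) + w*(q*b) + w*((p*r)*c) + w*((q*r)*d) =
        w*((p*a) + (q*b) + ((p*r)*c) + ((q*r)*d)) := by ring
    have h3 : n ∣ w*((p*a) + (q*b) + ((p*r)*c) + ((q*r)*d)) := Dvd.dvd.mul_left hsumy w
    have h4 : T w ≡ 0 [MOD n] := by
      rw [h2] at h1
      exact h1.trans ((Nat.modEq_zero_iff_dvd).mpr h3)
    exact (Nat.modEq_zero_iff_dvd).mp h4
  have hclass : ∀ w, Nat.Coprime w n → T w = n ∨ T w = 2*n ∨ T w = 3*n := by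
    intro w hw
    have r1 := resid_pos n (w*(p*a)) hn0
    have r2 := resid_pos n (w*(q*b)) hn0
    have r3 := resid_pos n (w*((p*r)*c)) hn0
    have r4 := resid_pos n (w*((q*r)*d)) hn0
    have l1 := resid_le n (w*(p*a)) hn0
    have l2 := resid_le n (w*(q*b)) hn0
    have l3 := resid_le n (w*((p*r)*c)) hn0
    have l4 := resid_le n (w*((q*r)*d)) hn0
    have hne4 : T w ≠ 4*n := by
      intro hc
      have h4 : resid n (w*((q*r)*d)) = n := by rw [hT] at hc; simp only at hc; omega
      exact (hndw w _ hw hnd4) ((resid_dvd_iff hn0).mp h4)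
    obtain ⟨m, hm⟩ := hTmod w
    have hTle : T w ≤ 4*n := by rw [hT]; simp only; omega
    have hT4 : 4 ≤ T w := by rw [hT]; simp only; omega
    have hm1 : 1 ≤ m := by
      rcases Nat.eq_zero_or_pos m with h0 | h0
      · rw [h0, Nat.mul_zero] at hm; omega
      · omega
    have hm3 : m < 4 := by
      by_contra hc
      push_neg at hc
      have : n*4 ≤ n*m := Nat.mul_le_mul_left n hc
      omega
    interval_cases m <;> omega
  by_cases hex : ∃ w, Nat.Coprime w n ∧ T w = n
  · -- conclude
    obtain ⟨w, hwc, hwT⟩ := hex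
    have hmem : n ∈ indSums n [x₁, x₂, x₃, x₄] := by
      refine ⟨w, hwc, ?_⟩
      simp only [List.map_cons, List.map_nil, List.sum_cons, List.sum_nil]
      have := hres w
      rw [hT] at hwT
      simp only at hwT
      omega
    have hlb : ∀ m ∈ indSums n [x₁, x₂, x₃, x₄], n ≤ m := by
      rintro m ⟨w', hw'c, hw's⟩
      simp only [List.map_cons, List.map_nil, List.sum_cons, List.sum_nil] at hw's
      have hdvd : n ∣ m := by
        have h1 : m ≡ w'*x₁ + w'*x₂ + w'*x₃ + w'*x₄ [MOD n] := by
          rw [← hw's]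
          have := (((resid_modeq n (w'*x₁)).add (resid_modeq n (w'*x₂))).add
            (resid_modeq n (w'*x₃))).add (resid_modeq n (w'*x₄))
          calc resid n (w' * x₁) + (resid n (w' * x₂) + (resid n (w' * x₃) + (resid n (w' * x₄) + 0)))
              = resid n (w'*x₁) + resid n (w'*x₂) + resid n (w'*x₃) + resid n (w'*x₄) := by ring
          _ ≡ w'*x₁ + w'*x₂ + w'*x₃ + w'*x₄ [MOD n] := this
        have h2 : w'*x₁ + w'*x₂ + w'*x₃ + w'*x₄ = w'*(x₁+x₂+x₃+x₄) := by ring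
        have h3 : n ∣ w'*(x₁+x₂+x₃+x₄) := Dvd.dvd.mul_left hsx w'
        rw [h2] at h1
        exact (Nat.modEq_zero_iff_dvd).mp (h1.trans ((Nat.modEq_zero_iff_dvd).mpr h3))
      have hpos : 0 < m := by
        have := resid_pos n (w'*x₁) hn0
        have := resid_pos n (w'*x₂) hn0
        have := resid_pos n (w'*x₃) hn0
        have := resid_pos n (w'*x₄) hn0
        omega
      exact Nat.le_of_dvd hpos hdvd
    have hsInf : sInf (indSums n [x₁, x₂, x₃, x₄]) = n :=
      le_antisymm (Nat.sInf_le hmem) (le_csInf ⟨n, hmem⟩ hlb)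
    rw [seqIndex, hsInf]
    exact div_self (by exact_mod_cast (by omega : n ≠ 0))
  · exfalso
    have h3n : ∀ w, Nat.Coprime w n → T w ≠ 3*n := by
      intro w hwc hc
      apply hex
      refine ⟨(n-1)*w, (Nat.Coprime.mul (coprime_pred n hn2) hwc), ?_⟩
      have compl : ∀ y, ¬ n ∣ y → resid n (((n-1)*w)*y) = n - resid n (w*y) := by
        intro y hy
        rw [show ((n-1)*w)*y = (n-1)*(w*y) by ring]
        exact resid_compl hn0 (hndw w y hwc hy)
      rw [hT]
      simp only
      rw [compl _ hnd1, compl _ hnd2, compl _ hnd3, compl _ hnd4]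
      rw [hT] at hc
      simp only at hc
      have l1 := resid_le n (w*(p*a)) hn0
      have l2 := resid_le n (w*(q*b)) hn0
      have l3 := resid_le n (w*((p*r)*c)) hn0
      have l4 := resid_le n (w*((q*r)*d)) hn0
      omega
    have hall2 : ∀ w, Nat.Coprime w n → T w = 2*n := by
      intro w hwc
      rcases hclass w hwc with h | h | h
      · exact absurd ⟨w, hwc, h⟩ hex
      · exact h
      · exact absurd h (h3n w hwc)
    subst hn
    refine core p q r a b c d hp hq hr hp5 hr5 cpq cpr cqr hbr hdp ?_
    intro w hwc
    have := hall2 w hwc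
    rw [hT] at this
    simpa using this
theorem main_theorem (p₁ p₂ p₃ n x₁ x₂ x₃ x₄ : ℕ)
    (hp₁ : p₁.Prime) (hp₂ : p₂.Prime) (hp₃ : p₃.Prime)
    (h12 : p₁ ≠ p₂) (h13 : p₁ ≠ p₃) (h23 : p₂ ≠ p₃)
    (hn : n = p₁ * p₂ * p₃) (hn6 : Nat.Coprime n 6) (hn1000 : 1000 < n)
    (hx : ∀ x ∈ [x₁, x₂, x₃, x₄], 1 ≤ x ∧ x ≤ n)
    (hmin : MinZeroSum n [x₁, x₂, x₃, x₄])
    (hgcds : ({Nat.gcd n x₁, Nat.gcd n x₂, Nat.gcd n x₃, Nat.gcd n x₄} : Set ℕ) =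
      {p₁, p₂, p₁ * p₃, p₂ * p₃}) :
    seqIndex n [x₁, x₂, x₃, x₄] = 1 := by
  have hsx : n ∣ x₁ + x₂ + x₃ + x₄ := by
    have h := hmin.1
    simp only [List.sum_cons, List.sum_nil] at h
    have e : x₁ + (x₂ + (x₃ + (x₄ + 0))) = x₁ + x₂ + x₃ + x₄ := by ring
    rwa [e] at h
  -- distinctness facts
  have hd13 : p₁ < p₁*p₃ := by
    have : p₁*2 ≤ p₁*p₃ := Nat.mul_le_mul_left p₁ hp₃.two_le
    have := hp₁.two_le
    omega
  have hd24 : p₂ < p₂*p₃ := by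
    have : p₂*2 ≤ p₂*p₃ := Nat.mul_le_mul_left p₂ hp₃.two_le
    have := hp₂.two_le
    omega
  have hd14 : p₁ ≠ p₂*p₃ := by
    intro hc
    have : p₂ ∣ p₁ := hc ▸ Dvd.intro p₃ rfl
    rcases (Nat.Prime.eq_one_or_self_of_dvd hp₁ p₂ this) with h | h
    · have := hp₂.two_le; omega
    · exact h12 h.symm
  have hd23 : p₂ ≠ p₁*p₃ := by
    intro hc
    have : p₁ ∣ p₂ := hc ▸ Dvd.intro p₃ rfl
    rcases (Nat.Prime.eq_one_or_self_of_dvd hp₂ p₁ this) with h | h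
    · have := hp₁.two_le; omega
    · exact h12 h
  have hd34 : p₁*p₃ ≠ p₂*p₃ := by
    intro hc
    exact h12 (Nat.eq_of_mul_eq_mul_right (by have := hp₃.two_le; omega) hc)
  -- memberships
  have m1 : p₁ = Nat.gcd n x₁ ∨ p₁ = Nat.gcd n x₂ ∨ p₁ = Nat.gcd n x₃ ∨ p₁ = Nat.gcd n x₄ := by
    have h : p₁ ∈ ({Nat.gcd n x₁, Nat.gcd n x₂, Nat.gcd n x₃, Nat.gcd n x₄} : Set ℕ) := by
      rw [hgcds]; simp
    simpa [Set.mem_insert_iff, Set.mem_singleton_iff, eq_comm] using h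
  have m2 : p₂ = Nat.gcd n x₁ ∨ p₂ = Nat.gcd n x₂ ∨ p₂ = Nat.gcd n x₃ ∨ p₂ = Nat.gcd n x₄ := by
    have h : p₂ ∈ ({Nat.gcd n x₁, Nat.gcd n x₂, Nat.gcd n x₃, Nat.gcd n x₄} : Set ℕ) := by
      rw [hgcds]; simp
    simpa [Set.mem_insert_iff, Set.mem_singleton_iff, eq_comm] using h
  have m3 : p₁*p₃ = Nat.gcd n x₁ ∨ p₁*p₃ = Nat.gcd n x₂ ∨ p₁*p₃ = Nat.gcd n x₃ ∨ p₁*p₃ = Nat.gcd n x₄ := by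
    have h : p₁*p₃ ∈ ({Nat.gcd n x₁, Nat.gcd n x₂, Nat.gcd n x₃, Nat.gcd n x₄} : Set ℕ) := by
      rw [hgcds]; simp
    simpa [Set.mem_insert_iff, Set.mem_singleton_iff, eq_comm] using h
  have m4 : p₂*p₃ = Nat.gcd n x₁ ∨ p₂*p₃ = Nat.gcd n x₂ ∨ p₂*p₃ = Nat.gcd n x₃ ∨ p₂*p₃ = Nat.gcd n x₄ := by
    have h : p₂*p₃ ∈ ({Nat.gcd n x₁, Nat.gcd n x₂, Nat.gcd n x₃, Nat.gcd n x₄} : Set ℕ) := by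
      rw [hgcds]; simp
    simpa [Set.mem_insert_iff, Set.mem_singleton_iff, eq_comm] using h
  rcases m1 with e1|e1|e1|e1 <;> rcases m2 with e2|e2|e2|e2 <;>
    rcases m3 with e3|e3|e3|e3 <;> rcases m4 with e4|e4|e4|e4 <;>
    first
      | exact finisher p₁ p₂ p₃ n x₁ x₂ x₃ x₄ hp₁ hp₂ hp₃ h12 h13 h23 hn hn6
          e1 e2 e3 e4 hsx (by omega) (fun w => by omega)
      | (exfalso; omega)
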